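/- arXiv:1205.5601 — 3 statements merged into one kernel-verified Lean document; each statement's English description precedes it below -/
import Mathlib

section
/- Adopt the spectral setup and the finite element setup. Then for every δ ∈ [0,1/2] and every x ∈ H: ‖A_h^{−δ} P_h x‖ ≤ (Σ_k λ_k^{−2δ} (x,e_k)²)^{1/2} = ‖A^{−δ} x‖. In particular, for δ = 1/2, ‖A_h^{−1/2} P_h x‖ ≤ ‖A^{−1/2} x‖. -/
open MeasureTheory Filter Set
open scoped ENNReal NNReal RealInnerProductSpace

noncomputable section

/-- The Laplace transform `b̂(z) = ∫₀^∞ e^{-zt} b(t) dt` of a real-valued kernel `b`. -/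
def laplaceTransform (b : ℝ → ℝ) (z : ℂ) : ℂ :=
  ∫ t in Set.Ioi (0 : ℝ), Complex.exp (-z * t) * (b t : ℂ)

/-- Assumption 1: `b` is a nonzero, locally integrable, 3-monotone kernel
(with derivative `b'` on `(0,∞)`), `b(t) → 0` as `t → ∞`, and the angle condition
`ρ = 1 + (2/π) sup{|arg b̂(λ)| : Re λ > 0} ∈ (1,2)` holds. -/
structure Assumption1 (b b' : ℝ → ℝ) (ρ : ℝ) : Prop where
  locInt : ∀ T > 0, IntegrableOn b (Set.Ioc 0 T)
  ne_zero : ∃ t > 0, b t ≠ 0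
  nonneg : ∀ t > 0, 0 ≤ b t
  anti : AntitoneOn b (Set.Ioi 0)
  cvx : ConvexOn ℝ (Set.Ioi 0) b
  hasDeriv : ∀ t > 0, HasDerivAt b (b' t) t
  deriv_nonpos : ∀ t > 0, b' t ≤ 0
  deriv_anti : AntitoneOn (fun t => -(b' t)) (Set.Ioi 0)
  deriv_cvx : ConvexOn ℝ (Set.Ioi 0) (fun t => -(b' t))
  tendsto_zero : Tendsto b atTop (nhds 0)
  rho_eq : ρ = 1 + (2 / Real.pi) *
      sSup {θ : ℝ | ∃ z : ℂ, 0 < z.re ∧ θ = |(laplaceTransform b z).arg|}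
  rho_mem : ρ ∈ Set.Ioo (1 : ℝ) 2

/-- Assumption 2: `b̂` extends analytically to a sector `Σ_θ`, `θ > π/2`, with the
bounds `|b̂^{(k)}(z)| ≤ C |z|^{1-ρ-k}`, `k = 0,1`, there. -/
structure Assumption2 (b : ℝ → ℝ) (ρ θ : ℝ) : Prop where
  theta_gt : Real.pi / 2 < θ
  holo : ∃ B : ℂ → ℂ,
    (∀ z : ℂ, z ≠ 0 → |z.arg| < θ → DifferentiableAt ℂ B z) ∧
    (∀ z : ℂ, 0 < z.re → B z = laplaceTransform b z) ∧
    ∃ C > 0, (∀ z : ℂ, z ≠ 0 → |z.arg| < θ → ‖B z‖ ≤ C * ‖z‖ ^ (1 - ρ)) ∧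
      (∀ z : ℂ, z ≠ 0 → |z.arg| < θ → ‖deriv B z‖ ≤ C * ‖z‖ ^ (-ρ))

/-- `s` (with derivative `s'` on `(0,∞)`) solves the scalar Volterra equation
`s'(t) + λ ∫₀ᵗ b(t-u) s(u) du = 0`, `s(0) = 1`. -/
structure IsScalarSolution (b : ℝ → ℝ) (lam : ℝ) (s s' : ℝ → ℝ) : Prop where
  init : s 0 = 1
  cont : ContinuousOn s (Set.Ici 0)
  hasDeriv : ∀ t > 0, HasDerivAt s (s' t) t
  eqn : ∀ t > 0, s' t + lam * ∫ u in (0 : ℝ)..t, b (t - u) * s u = 0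

/-- The resolvent family `S(t)x = Σ_k s_k(t) (x,e_k) e_k`. -/
def Sop {H : Type*} [NormedAddCommGroup H] [InnerProductSpace ℝ H]
    (e : HilbertBasis ℕ ℝ H) (s : ℕ → ℝ → ℝ) (t : ℝ) (x : H) : H :=
  ∑' k, (s k t * ⟪x, e k⟫) • (e k : H)

/-- The Backward Euler convolution quadrature operator
`B_k = ∫₀^∞ F(Δt s) e^{-s} s^{k-1}/(k-1)! ds`. -/
def quadB {H : Type*} [NormedAddCommGroup H] [NormedSpace ℝ H]
    (Δt : ℝ) (F : ℝ → H) (k : ℕ) : H :=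
  ∫ u in Set.Ioi (0 : ℝ),
    (Real.exp (-u) * u ^ (k - 1) / (Nat.factorial (k - 1) : ℝ)) • F (Δt * u)

/-- The finite element setup: `f` is an orthonormal basis of the finite dimensional
subspace `V_h ⊆ D(A^{1/2})`, consisting of eigenvectors of the discrete operator `A_h`
(defined via the bilinear form `a(u,v) = Σ_k λ_k (u,e_k)(v,e_k)`) with positive
eigenvalues `μ`. -/
structure FESetup {H : Type*} [NormedAddCommGroup H] [InnerProductSpace ℝ H]
    (e : HilbertBasis ℕ ℝ H) (lam : ℕ → ℝ) (N : ℕ) (f : Fin N → H) (μ : Fin N → ℝ) :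
    Prop where
  f_orth : Orthonormal ℝ f
  mu_pos : ∀ j, 0 < μ j
  f_dom : ∀ j, (∑' k, ENNReal.ofReal (lam k * ⟪f j, e k⟫ ^ 2)) < ⊤
  eigen : ∀ j j', (∑' k, lam k * ⟪f j, e k⟫ * ⟪f j', e k⟫) = μ j * ⟪f j, f j'⟫


private lemma summable_of_ofReal_tsum_ne_top {f : ℕ → ℝ} (hf : ∀ n, 0 ≤ f n)
    (h : (∑' n, ENNReal.ofReal (f n)) ≠ ⊤) : Summable f :=
  (ENNReal.summable_toReal h).congr fun n => ENNReal.toReal_ofReal (hf n)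

/-- Core resolvent inequality: for every `t ≥ 0`,
`∑_j (x,f_j)²/(t+μ_j) ≤ ∑_k (x,e_k)²/(t+λ_k)`. -/
private lemma key_resolvent {H : Type*} [NormedAddCommGroup H] [InnerProductSpace ℝ H]
    [CompleteSpace H]
    (e : HilbertBasis ℕ ℝ H) (lam : ℕ → ℝ) (hlam_pos : ∀ k, 0 < lam k)
    {N : ℕ} {f : Fin N → H} {μ : Fin N → ℝ} (hfe : FESetup e lam N f μ)
    (x : H) (t : ℝ) (ht : 0 ≤ t) :
    ENNReal.ofReal (∑ j, ⟪x, f j⟫ ^ 2 / (t + μ j)) ≤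
      ∑' k, ENNReal.ofReal (⟪x, e k⟫ ^ 2 / (t + lam k)) := by
  classical
  have htμ : ∀ j, 0 < t + μ j := fun j => add_pos_of_nonneg_of_pos ht (hfe.mu_pos j)
  have htlam : ∀ k, 0 < t + lam k := fun k => add_pos_of_nonneg_of_pos ht (hlam_pos k)
  by_cases hS : (∑' k, ENNReal.ofReal (⟪x, e k⟫ ^ 2 / (t + lam k))) = ⊤
  · rw [hS]; exact le_top
  have hSsum : Summable fun k => ⟪x, e k⟫ ^ 2 / (t + lam k) :=
    summable_of_ofReal_tsum_ne_top (fun k => div_nonneg (sq_nonneg _) (htlam k).le) hS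
  set g : Fin N → ℝ := fun j => ⟪x, f j⟫ / (t + μ j) with hg
  set χ : H := ∑ j, g j • f j with hχ
  have hite : ∀ j j', ⟪f j, f j'⟫ = if j = j' then (1 : ℝ) else 0 := fun j j' =>
    orthonormal_iff_ite.mp hfe.f_orth j j'
  have hyχ : ∀ y : H, ⟪y, χ⟫ = ∑ j, g j * ⟪y, f j⟫ := by
    intro y
    rw [hχ, inner_sum]
    exact Finset.sum_congr rfl fun j _ => real_inner_smul_right y (f j) (g j)
  have hχf : ∀ j, ⟪χ, f j⟫ = g j := by
    intro j
    rw [real_inner_comm, hyχ (f j)]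
    simp [hite]
  have hγdef : ∀ k, ⟪χ, (e k : H)⟫ = ∑ j, g j * ⟪f j, e k⟫ := by
    intro k
    rw [hχ, sum_inner]
    exact Finset.sum_congr rfl fun j _ => real_inner_smul_left (f j) (e k) (g j)
  have hdom : ∀ j, Summable fun k => lam k * ⟪f j, e k⟫ ^ 2 := fun j =>
    summable_of_ofReal_tsum_ne_top
      (fun k => mul_nonneg (hlam_pos k).le (sq_nonneg _)) (hfe.f_dom j).ne
  have hcross : ∀ j j', Summable fun k => lam k * ⟪f j, e k⟫ * ⟪f j', e k⟫ := by
    intro j j'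
    apply Summable.of_abs
    refine Summable.of_nonneg_of_le (fun k => abs_nonneg _) (fun k => ?_)
      (((hdom j).add (hdom j')).div_const 2)
    have h1 : |lam k * ⟪f j, e k⟫ * ⟪f j', e k⟫|
        = lam k * (|⟪f j, e k⟫| * |⟪f j', e k⟫|) := by
      rw [abs_mul, abs_mul, abs_of_pos (hlam_pos k), mul_assoc]
    rw [h1]
    have h2 : |⟪f j, e k⟫| * |⟪f j', e k⟫| ≤ (⟪f j, e k⟫ ^ 2 + ⟪f j', e k⟫ ^ 2) / 2 := by
      nlinarith [sq_nonneg (|⟪f j, e k⟫| - |⟪f j', e k⟫|), sq_abs ⟪f j, e k⟫,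
        sq_abs ⟪f j', e k⟫]
    calc lam k * (|⟪f j, e k⟫| * |⟪f j', e k⟫|)
        ≤ lam k * ((⟪f j, e k⟫ ^ 2 + ⟪f j', e k⟫ ^ 2) / 2) :=
          mul_le_mul_of_nonneg_left h2 (hlam_pos k).le
      _ = (lam k * ⟪f j, e k⟫ ^ 2 + lam k * ⟪f j', e k⟫ ^ 2) / 2 := by ring
  have h2 : ∀ j j', HasSum (fun k => (g j * g j') * (lam k * ⟪f j, e k⟫ * ⟪f j', e k⟫))
      ((g j * g j') * (μ j * ⟪f j, f j'⟫)) := by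
    intro j j'
    have hs := (hcross j j').hasSum
    rw [hfe.eigen j j'] at hs
    exact hs.mul_left _
  have h3 : HasSum (fun k => ∑ j, ∑ j', (g j * g j') * (lam k * ⟪f j, e k⟫ * ⟪f j', e k⟫))
      (∑ j, ∑ j', (g j * g j') * (μ j * ⟪f j, f j'⟫)) :=
    hasSum_sum fun j _ => hasSum_sum fun j' _ => h2 j j'
  have h1eq : ∀ k, (∑ j, ∑ j', (g j * g j') * (lam k * ⟪f j, e k⟫ * ⟪f j', e k⟫))
      = lam k * ⟪χ, (e k : H)⟫ ^ 2 := by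
    intro k
    rw [hγdef k, sq, Finset.sum_mul_sum, Finset.mul_sum]
    refine Finset.sum_congr rfl fun j _ => ?_
    rw [Finset.mul_sum]
    exact Finset.sum_congr rfl fun j' _ => by ring
  have hval : (∑ j, ∑ j', (g j * g j') * (μ j * ⟪f j, f j'⟫)) = ∑ j, g j ^ 2 * μ j := by
    refine Finset.sum_congr rfl fun j _ => ?_
    rw [Finset.sum_eq_single j]
    · rw [hite, if_pos rfl]; ring
    · intro j' _ hne
      rw [hite, if_neg (Ne.symm hne)]; ring
    · intro h; exact absurd (Finset.mem_univ j) h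
  have h3' : HasSum (fun k => lam k * ⟪χ, (e k : H)⟫ ^ 2) (∑ j, g j ^ 2 * μ j) := by
    have h3'' := h3
    rw [funext h1eq, hval] at h3''
    exact h3''
  have hχχ : ⟪χ, χ⟫ = ∑ j, g j ^ 2 := by
    rw [hyχ χ]
    exact Finset.sum_congr rfl fun j _ => by rw [hχf j, sq]
  have h4 : HasSum (fun k => ⟪χ, (e k : H)⟫ ^ 2) (∑ j, g j ^ 2) := by
    have hp := e.hasSum_inner_mul_inner χ χ
    rw [hχχ] at hp
    have hfun : (fun k => ⟪χ, (e k : H)⟫ * ⟪(e k : H), χ⟫)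
        = fun k => ⟪χ, (e k : H)⟫ ^ 2 := by
      funext k
      rw [real_inner_comm (e k : H) χ]; ring
    rwa [hfun] at hp
  have hQ : HasSum (fun k => (t + lam k) * ⟪χ, (e k : H)⟫ ^ 2)
      (∑ j, ⟪x, f j⟫ ^ 2 / (t + μ j)) := by
    have hsum := (h4.mul_left t).add h3'
    have hfun : (fun k => t * ⟪χ, (e k : H)⟫ ^ 2 + lam k * ⟪χ, (e k : H)⟫ ^ 2)
        = fun k => (t + lam k) * ⟪χ, (e k : H)⟫ ^ 2 := by
      funext k; ring
    rw [hfun] at hsum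
    have hval2 : t * (∑ j, g j ^ 2) + ∑ j, g j ^ 2 * μ j
        = ∑ j, ⟪x, f j⟫ ^ 2 / (t + μ j) := by
      rw [Finset.mul_sum, ← Finset.sum_add_distrib]
      refine Finset.sum_congr rfl fun j _ => ?_
      have hne := (htμ j).ne'
      simp only [hg]
      field_simp
    rwa [hval2] at hsum
  have hP : HasSum (fun k => ⟪x, (e k : H)⟫ * ⟪χ, (e k : H)⟫)
      (∑ j, ⟪x, f j⟫ ^ 2 / (t + μ j)) := by
    have hp := e.hasSum_inner_mul_inner x χ
    have hfun : (fun k => ⟪x, (e k : H)⟫ * ⟪(e k : H), χ⟫)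
        = fun k => ⟪x, (e k : H)⟫ * ⟪χ, (e k : H)⟫ := by
      funext k
      rw [real_inner_comm (e k : H) χ]
    rw [hfun] at hp
    have hxχ : ⟪x, χ⟫ = ∑ j, ⟪x, f j⟫ ^ 2 / (t + μ j) := by
      rw [hyχ x]
      refine Finset.sum_congr rfl fun j _ => ?_
      simp only [hg]
      rw [div_mul_eq_mul_div, sq]
    rwa [hxχ] at hp
  have hpt : ∀ k, 2 * (⟪x, (e k : H)⟫ * ⟪χ, (e k : H)⟫)
      ≤ ⟪x, (e k : H)⟫ ^ 2 / (t + lam k) + (t + lam k) * ⟪χ, (e k : H)⟫ ^ 2 := by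
    intro k
    have h := htlam k
    have hne := h.ne'
    have hkey : ⟪x, (e k : H)⟫ ^ 2 / (t + lam k) + (t + lam k) * ⟪χ, (e k : H)⟫ ^ 2
        - 2 * (⟪x, (e k : H)⟫ * ⟪χ, (e k : H)⟫)
        = (⟪x, (e k : H)⟫ - (t + lam k) * ⟪χ, (e k : H)⟫) ^ 2 / (t + lam k) := by
      field_simp
      ring
    have h2' : 0 ≤ (⟪x, (e k : H)⟫ - (t + lam k) * ⟪χ, (e k : H)⟫) ^ 2 / (t + lam k) :=
      div_nonneg (sq_nonneg _) h.le
    linarith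
  have hG : HasSum (fun k => ⟪x, (e k : H)⟫ ^ 2 / (t + lam k)
      + (t + lam k) * ⟪χ, (e k : H)⟫ ^ 2)
      ((∑' k, ⟪x, (e k : H)⟫ ^ 2 / (t + lam k)) + ∑ j, ⟪x, f j⟫ ^ 2 / (t + μ j)) :=
    hSsum.hasSum.add hQ
  have h2L : HasSum (fun k => 2 * (⟪x, (e k : H)⟫ * ⟪χ, (e k : H)⟫))
      (2 * ∑ j, ⟪x, f j⟫ ^ 2 / (t + μ j)) := hP.mul_left 2
  have hLS : (∑ j, ⟪x, f j⟫ ^ 2 / (t + μ j)) ≤ ∑' k, ⟪x, (e k : H)⟫ ^ 2 / (t + lam k) := by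
    have := hasSum_le hpt h2L hG
    linarith
  rw [← ENNReal.ofReal_tsum_of_nonneg (fun k => div_nonneg (sq_nonneg _) (htlam k).le) hSsum]
  exact ENNReal.ofReal_le_ofReal hLS

/-- `‖A_h^{-δ} P_h x‖ ≤ ‖A^{-δ} x‖` for `δ ∈ [0,1/2]`, in the spectral
(Parseval) form: the left side is computed in the discrete eigenbasis `f`, the right
side in the eigenbasis `e` of `A`. -/
theorem statement6 {H : Type*} [NormedAddCommGroup H] [InnerProductSpace ℝ H]
    [CompleteSpace H]
    (e : HilbertBasis ℕ ℝ H) (lam : ℕ → ℝ)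
    (hlam_pos : ∀ k, 0 < lam k) (hlam_mono : Monotone lam)
    (hlam_top : Tendsto lam atTop atTop)
    (N : ℕ) (f : Fin N → H) (μ : Fin N → ℝ) (hfe : FESetup e lam N f μ) :
    ∀ δ ∈ Set.Icc (0 : ℝ) (1 / 2), ∀ x : H,
      ENNReal.ofReal (∑ j, μ j ^ (-(2 * δ)) * ⟪x, f j⟫ ^ 2) ≤
        ∑' k, ENNReal.ofReal (lam k ^ (-(2 * δ)) * ⟪x, e k⟫ ^ 2) := by
  classical
  rintro δ ⟨hδ0, hδ2⟩ x
  rcases eq_or_lt_of_le hδ0 with h0 | h0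
  · -- δ = 0 : Bessel's inequality
    simp only [← h0, mul_zero, neg_zero, Real.rpow_zero, one_mul]
    have hp := e.hasSum_inner_mul_inner x x
    rw [real_inner_self_eq_norm_sq x] at hp
    have hfun : (fun k => ⟪x, (e k : H)⟫ * ⟪(e k : H), x⟫) = fun k => ⟪x, (e k : H)⟫ ^ 2 := by
      funext k; rw [real_inner_comm (e k : H) x]; ring
    rw [hfun] at hp
    have bess : (∑ j, ⟪x, f j⟫ ^ 2) ≤ ‖x‖ ^ 2 := by
      have hB := hfe.f_orth.sum_inner_products_le (s := Finset.univ) x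
      refine le_trans (le_of_eq ?_) hB
      refine Finset.sum_congr rfl fun j _ => ?_
      rw [real_inner_comm, Real.norm_eq_abs, sq_abs]
    calc ENNReal.ofReal (∑ j, ⟪x, f j⟫ ^ 2) ≤ ENNReal.ofReal (‖x‖ ^ 2) :=
          ENNReal.ofReal_le_ofReal bess
      _ = ∑' k, ENNReal.ofReal (⟪x, e k⟫ ^ 2) := by
          rw [← hp.tsum_eq,
            ENNReal.ofReal_tsum_of_nonneg (fun k => sq_nonneg _) hp.summable]
  rcases eq_or_lt_of_le hδ2 with h2 | h2
  · -- δ = 1/2 : resolvent inequality at t = 0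
    have hkey := key_resolvent e lam hlam_pos hfe x 0 le_rfl
    simp only [zero_add] at hkey
    have hexp : -(2 * δ) = (-1 : ℝ) := by rw [h2]; norm_num
    simp only [hexp, Real.rpow_neg_one, inv_mul_eq_div]
    exact hkey
  · -- 0 < δ < 1/2 : Mellin representation of negative fractional powers
    have hθ0 : (0 : ℝ) < 2 * δ := by linarith
    have hθ1 : 2 * δ < 1 := by linarith
    set θ : ℝ := 2 * δ with hθdef
    set w : ℝ → ℝ := fun u => u ^ (-θ) / (1 + u) with hw
    have hw_meas : Measurable w :=
      (measurable_id.pow_const (-θ)).div (measurable_const.add measurable_id)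
    have hw_nonneg : ∀ u : ℝ, u ∈ Ioi (0 : ℝ) → 0 ≤ w u := by
      intro u hu
      have hu0 : (0 : ℝ) < u := hu
      exact div_nonneg (Real.rpow_nonneg hu0.le _) (by linarith)
    have hInt : IntegrableOn w (Ioi 0) := by
      have h01 : IntegrableOn (fun u : ℝ => u ^ (-θ)) (Ioc 0 1) := by
        have h := intervalIntegral.intervalIntegrable_rpow' (a := 0) (b := 1)
          (show (-1 : ℝ) < -θ by linarith)
        rwa [intervalIntegrable_iff_integrableOn_Ioc_of_le zero_le_one] at h
      have hpart1 : IntegrableOn w (Ioc 0 1) := by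
        refine Integrable.mono h01 hw_meas.aestronglyMeasurable.restrict ?_
        refine (ae_restrict_iff' measurableSet_Ioc).2 (ae_of_all _ fun u hu => ?_)
        have hu0 : (0 : ℝ) < u := hu.1
        rw [Real.norm_eq_abs, Real.norm_eq_abs, abs_of_nonneg (hw_nonneg u hu0),
          abs_of_nonneg (Real.rpow_nonneg hu0.le _)]
        simp only [hw]
        exact div_le_self (Real.rpow_nonneg hu0.le _) (by linarith)
      have hpart2 : IntegrableOn w (Ioi 1) := by
        have hi : IntegrableOn (fun u : ℝ => u ^ (-θ - 1)) (Ioi 1) :=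
          integrableOn_Ioi_rpow_of_lt (by linarith) one_pos
        refine Integrable.mono hi hw_meas.aestronglyMeasurable.restrict ?_
        refine (ae_restrict_iff' measurableSet_Ioi).2 (ae_of_all _ fun u hu => ?_)
        have hu1 : (1 : ℝ) < u := hu
        have hu0 : (0 : ℝ) < u := lt_trans one_pos hu1
        rw [Real.norm_eq_abs, Real.norm_eq_abs, abs_of_nonneg (hw_nonneg u hu0),
          abs_of_nonneg (Real.rpow_nonneg hu0.le _)]
        have hrw : u ^ (-θ - 1) = u ^ (-θ) / u := by
          rw [Real.rpow_sub hu0, Real.rpow_one]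
        rw [hrw]
        simp only [hw]
        gcongr
        all_goals first
          | linarith
          | exact Real.rpow_nonneg hu0.le _
      have hu := hpart1.union hpart2
      rwa [Set.Ioc_union_Ioi_eq_Ioi zero_le_one] at hu
    set C : ℝ := ∫ u in Ioi (0 : ℝ), w u with hC
    set K : ℝ≥0∞ := ∫⁻ u in Ioi (0 : ℝ), ENNReal.ofReal (w u) with hK
    have hwnn_ae : 0 ≤ᵐ[volume.restrict (Ioi 0)] w :=
      (ae_restrict_iff' measurableSet_Ioi).2 (ae_of_all _ hw_nonneg)
    have hKC : K = ENNReal.ofReal C := by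
      rw [hK, hC, ← ofReal_integral_eq_lintegral_ofReal hInt hwnn_ae]
    have hCpos : 0 < C := by
      rw [hC, setIntegral_pos_iff_support_of_nonneg_ae hwnn_ae hInt]
      have hsub : Ioi (0 : ℝ) ⊆ Function.support w ∩ Ioi 0 := by
        intro u hu
        have hu0 : (0 : ℝ) < u := hu
        refine ⟨ne_of_gt ?_, hu⟩
        exact div_pos (Real.rpow_pos_of_pos hu0 _) (by linarith)
      refine lt_of_lt_of_le ?_ (measure_mono hsub)
      rw [Real.volume_Ioi]
      exact ENNReal.zero_lt_top
    have hK0 : K ≠ 0 := by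
      rw [hKC]
      exact (ENNReal.ofReal_pos.2 hCpos).ne'
    have hKtop : K ≠ ⊤ := by rw [hKC]; exact ENNReal.ofReal_ne_top
    have hsubst : ∀ c : ℝ, 0 < c →
        (∫⁻ s in Ioi (0 : ℝ), ENNReal.ofReal (s ^ (-θ) / (s + c)))
          = ENNReal.ofReal (c ^ (-θ)) * K := by
      intro c hc
      have heq : ∀ s ∈ Ioi (0 : ℝ), s ^ (-θ) / (s + c) = c ^ (-θ - 1) * w (c⁻¹ * s) := by
        intro s hs
        have hs0 : (0 : ℝ) < s := hs
        simp only [hw]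
        have h1 : (c⁻¹ * s) ^ (-θ) = (c ^ (-θ))⁻¹ * s ^ (-θ) := by
          rw [Real.mul_rpow (inv_nonneg.2 hc.le) hs0.le, Real.inv_rpow hc.le]
        have h2 : c ^ (-θ - 1) = c ^ (-θ) / c := by
          rw [Real.rpow_sub hc, Real.rpow_one]
        rw [h1, h2]
        have hd1 : (0 : ℝ) < 1 + c⁻¹ * s := by positivity
        have hcθ : (0 : ℝ) < c ^ (-θ) := Real.rpow_pos_of_pos hc _
        have hsc : (0 : ℝ) < s + c := by linarith
        field_simp
        ring
      have hcomp : IntegrableOn (fun s => w (c⁻¹ * s)) (Ioi 0) := by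
        have hiff := (integrableOn_Ioi_comp_mul_left_iff w 0 (inv_pos.2 hc))
        simp only [mul_zero] at hiff
        exact hiff.2 hInt
      have hIl : IntegrableOn (fun s : ℝ => s ^ (-θ) / (s + c)) (Ioi 0) := by
        refine IntegrableOn.congr_fun (hcomp.const_mul (c ^ (-θ - 1))) ?_ measurableSet_Ioi
        intro s hs
        exact (heq s hs).symm
      have hreal : (∫ s in Ioi (0 : ℝ), s ^ (-θ) / (s + c)) = c ^ (-θ) * C := by
        rw [setIntegral_congr_fun measurableSet_Ioi heq, integral_const_mul,
          integral_comp_mul_left_Ioi w 0 (inv_pos.2 hc)]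
        simp only [mul_zero, inv_inv, smul_eq_mul, ← hC]
        have h2 : c ^ (-θ - 1) = c ^ (-θ) / c := by
          rw [Real.rpow_sub hc, Real.rpow_one]
        rw [h2]
        field_simp
      have hnn : 0 ≤ᵐ[volume.restrict (Ioi 0)] fun s : ℝ => s ^ (-θ) / (s + c) := by
        refine (ae_restrict_iff' measurableSet_Ioi).2 (ae_of_all _ fun s hs => ?_)
        have hs0 : (0 : ℝ) < s := hs
        exact div_nonneg (Real.rpow_nonneg hs0.le _) (by linarith)
      rw [← ofReal_integral_eq_lintegral_ofReal hIl hnn, hreal,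
        ENNReal.ofReal_mul (Real.rpow_nonneg hc.le _), hKC]
    have hmeasG : ∀ c b2 : ℝ, Measurable fun s : ℝ =>
        ENNReal.ofReal (s ^ (-θ)) * ENNReal.ofReal (b2 / (s + c)) := fun c b2 =>
      ((measurable_id.pow_const (-θ)).ennreal_ofReal).mul
        ((measurable_const.div (measurable_id.add_const c)).ennreal_ofReal)
    have hcore : ∀ b2 c : ℝ, 0 ≤ b2 → 0 < c →
        ENNReal.ofReal (c ^ (-θ) * b2) * K
          = ∫⁻ s in Ioi (0 : ℝ), ENNReal.ofReal (s ^ (-θ)) * ENNReal.ofReal (b2 / (s + c)) := by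
      intro b2 c hb2 hc
      rw [ENNReal.ofReal_mul (Real.rpow_nonneg hc.le _)]
      calc ENNReal.ofReal (c ^ (-θ)) * ENNReal.ofReal b2 * K
          = ENNReal.ofReal b2 * (ENNReal.ofReal (c ^ (-θ)) * K) := by ring
        _ = ENNReal.ofReal b2 * ∫⁻ s in Ioi (0 : ℝ), ENNReal.ofReal (s ^ (-θ) / (s + c)) := by
            rw [hsubst c hc]
        _ = ∫⁻ s in Ioi (0 : ℝ), ENNReal.ofReal b2 * ENNReal.ofReal (s ^ (-θ) / (s + c)) :=
            (lintegral_const_mul' _ _ ENNReal.ofReal_ne_top).symm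
        _ = ∫⁻ s in Ioi (0 : ℝ), ENNReal.ofReal (s ^ (-θ)) * ENNReal.ofReal (b2 / (s + c)) := by
            refine setLIntegral_congr_fun measurableSet_Ioi (fun s hs => ?_)
            have hs0 : (0 : ℝ) < s := hs
            rw [← ENNReal.ofReal_mul hb2, ← ENNReal.ofReal_mul (Real.rpow_nonneg hs0.le _)]
            congr 1
            ring
    have hfinal : (ENNReal.ofReal (∑ j, μ j ^ (-θ) * ⟪x, f j⟫ ^ 2)) * K
        ≤ (∑' k, ENNReal.ofReal (lam k ^ (-θ) * ⟪x, e k⟫ ^ 2)) * K := by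
      have hLrw : ENNReal.ofReal (∑ j, μ j ^ (-θ) * ⟪x, f j⟫ ^ 2) * K
          = ∫⁻ s in Ioi (0 : ℝ), ∑ j, ENNReal.ofReal (s ^ (-θ))
              * ENNReal.ofReal (⟪x, f j⟫ ^ 2 / (s + μ j)) := by
        rw [ENNReal.ofReal_sum_of_nonneg
          (fun j _ => mul_nonneg (Real.rpow_nonneg (hfe.mu_pos j).le _) (sq_nonneg _)),
          Finset.sum_mul,
          lintegral_finset_sum _ (fun j _ => hmeasG (μ j) (⟪x, f j⟫ ^ 2))]
        exact Finset.sum_congr rfl fun j _ => hcore _ _ (sq_nonneg _) (hfe.mu_pos j)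
      have hRrw : (∑' k, ENNReal.ofReal (lam k ^ (-θ) * ⟪x, e k⟫ ^ 2)) * K
          = ∫⁻ s in Ioi (0 : ℝ), ∑' k, ENNReal.ofReal (s ^ (-θ))
              * ENNReal.ofReal (⟪x, e k⟫ ^ 2 / (s + lam k)) := by
        rw [lintegral_tsum (fun k => (hmeasG (lam k) (⟪x, e k⟫ ^ 2)).aemeasurable),
          ← ENNReal.tsum_mul_right]
        exact tsum_congr fun k => hcore _ _ (sq_nonneg _) (hlam_pos k)
      rw [hLrw, hRrw]
      refine lintegral_mono_ae ((ae_restrict_iff' measurableSet_Ioi).2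
        (ae_of_all _ fun s hs => ?_))
      have hs0 : (0 : ℝ) ≤ s := le_of_lt hs
      calc (∑ j, ENNReal.ofReal (s ^ (-θ)) * ENNReal.ofReal (⟪x, f j⟫ ^ 2 / (s + μ j)))
          = ENNReal.ofReal (s ^ (-θ))
              * ∑ j, ENNReal.ofReal (⟪x, f j⟫ ^ 2 / (s + μ j)) := by
            rw [Finset.mul_sum]
        _ = ENNReal.ofReal (s ^ (-θ))
              * ENNReal.ofReal (∑ j, ⟪x, f j⟫ ^ 2 / (s + μ j)) := by
            rw [ENNReal.ofReal_sum_of_nonneg (fun j _ => div_nonneg (sq_nonneg _)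
              (add_pos_of_nonneg_of_pos hs0 (hfe.mu_pos j)).le)]
        _ ≤ ENNReal.ofReal (s ^ (-θ))
              * ∑' k, ENNReal.ofReal (⟪x, e k⟫ ^ 2 / (s + lam k)) :=
            mul_le_mul_right (key_resolvent e lam hlam_pos hfe x s hs0) _
        _ = ∑' k, ENNReal.ofReal (s ^ (-θ)) * ENNReal.ofReal (⟪x, e k⟫ ^ 2 / (s + lam k)) :=
            ENNReal.tsum_mul_left.symm
    exact (ENNReal.mul_le_mul_iff_left hK0 hKtop).1 hfinal
end
end

section
/- Let H be a real separable Hilbert space, let F : [0,∞) → H be strongly measurable and bounded, let Δt > 0, and for Re z > 0 define the Laplace transform F̂(z) := ∫₀^∞ e^{−zt} F(t) dt. Then for every complex z with |z| < 1: z · (1/Δt) · F̂((1−z)/Δt) = Σ_{k=1}^∞ z^k ∫₀^∞ F(Δt s) · e^{−s} s^{k−1}/(k−1)! ds, where the series converges absolutely in H. (This identity shows that the Backward Euler convolution quadrature operators B_k, defined by the generating function identity Σ_k B_k z^k = ((1−z)I + b̂((1−z)/Δt)·Δt·A)^{−1}(I + b̂((1−z)/Δt)·Δt·A), admit the integral representation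 B_k x = ∫₀^∞ S(Δt s) x · e^{−s} s^{k−1}/(k−1)! ds for k ≥ 1 in terms of the resolvent family S.) -/
open MeasureTheory Filter Set
open scoped ENNReal NNReal RealInnerProductSpace

noncomputable section

set_option maxHeartbeats 1600000 in
/-- the generating function identity behind the Backward Euler
convolution quadrature: for `|z| < 1`,
`z (1/Δt) F̂((1-z)/Δt) = Σ_{k≥1} z^k ∫₀^∞ F(Δt s) e^{-s} s^{k-1}/(k-1)! ds`,
the series converging absolutely. (`H` is taken as a complex Hilbert space, the
complexification in which the identity is stated.) -/
theorem statement13 {H : Type*} [NormedAddCommGroup H] [InnerProductSpace ℂ H]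
    [CompleteSpace H] (F : ℝ → H)
    (hF : AEStronglyMeasurable F (volume.restrict (Set.Ioi (0 : ℝ))))
    (hbd : ∃ M : ℝ, ∀ t : ℝ, 0 ≤ t → ‖F t‖ ≤ M)
    (Δt : ℝ) (hΔt : 0 < Δt) (z : ℂ) (hz : ‖z‖ < 1) :
    Summable (fun m : ℕ =>
      ‖z ^ (m + 1) • ∫ u in Set.Ioi (0 : ℝ),
          (Real.exp (-u) * u ^ m / (Nat.factorial m : ℝ)) • F (Δt * u)‖) ∧
    (z / (Δt : ℂ)) •
        (∫ t in Set.Ioi (0 : ℝ), Complex.exp (-((1 - z) / (Δt : ℂ)) * (t : ℂ)) • F t) =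
      ∑' m : ℕ, z ^ (m + 1) • ∫ u in Set.Ioi (0 : ℝ),
          (Real.exp (-u) * u ^ m / (Nat.factorial m : ℝ)) • F (Δt * u) := by
  classical
  obtain ⟨M, hM⟩ := hbd
  have hM0 : 0 ≤ M := le_trans (norm_nonneg (F 0)) (hM 0 le_rfl)
  have hΔtC : (Δt : ℂ) ≠ 0 := Complex.ofReal_ne_zero.mpr hΔt.ne'
  set G : ℝ → H := fun u => F (Δt * u) with hGdef
  -- measurability of `G` on `Ioi 0`
  have hpre : (fun u : ℝ => Δt * u) ⁻¹' (Set.Ioi 0) = Set.Ioi 0 := by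
    ext u
    simp only [Set.mem_preimage, Set.mem_Ioi]
    exact ⟨fun h => by nlinarith, fun h => mul_pos hΔt h⟩
  have hq : Measure.QuasiMeasurePreserving (fun u : ℝ => Δt * u)
      (volume.restrict (Set.Ioi (0 : ℝ))) (volume.restrict (Set.Ioi (0 : ℝ))) := by
    refine ⟨measurable_const_mul Δt, ?_⟩
    have : (volume.restrict (Set.Ioi (0 : ℝ))).map (fun u : ℝ => Δt * u)
        = (ENNReal.ofReal |Δt⁻¹| • volume).restrict (Set.Ioi (0 : ℝ)) := by
      rw [← hpre, ← Measure.restrict_map (measurable_const_mul Δt) measurableSet_Ioi,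
        Real.map_volume_mul_left hΔt.ne', hpre]
    rw [this, Measure.restrict_smul]
    exact Measure.absolutelyContinuous_of_le_smul le_rfl
  have hG : AEStronglyMeasurable G (volume.restrict (Set.Ioi (0 : ℝ))) :=
    hF.comp_quasiMeasurePreserving hq
  have hGb : ∀ u : ℝ, u ∈ Set.Ioi (0 : ℝ) → ‖G u‖ ≤ M := fun u hu =>
    hM _ (mul_pos hΔt hu).le
  -- the Gamma integrals
  have hc_int : ∀ m : ℕ, IntegrableOn (fun u : ℝ => Real.exp (-u) * u ^ m)
      (Set.Ioi (0 : ℝ)) := by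
    intro m
    refine (Real.GammaIntegral_convergent (s := (m : ℝ) + 1) (by positivity)).congr_fun
      (fun u hu => ?_) measurableSet_Ioi
    simp only [add_sub_cancel_right, Real.rpow_natCast]
  have hc_val : ∀ m : ℕ, (∫ u in Set.Ioi (0 : ℝ), Real.exp (-u) * u ^ m)
      = (Nat.factorial m : ℝ) := by
    intro m
    have h1 := (Real.Gamma_eq_integral (s := (m : ℝ) + 1) (by positivity)).symm
    rw [Real.Gamma_nat_eq_factorial] at h1
    rw [← h1]
    refine setIntegral_congr_fun measurableSet_Ioi fun u hu => ?_
    rw [add_sub_cancel_right, Real.rpow_natCast]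
  -- bound on the quadrature operators
  have hJ_bound : ∀ m : ℕ, ‖∫ u in Set.Ioi (0 : ℝ),
      (Real.exp (-u) * u ^ m / (Nat.factorial m : ℝ)) • G u‖ ≤ M := by
    intro m
    have hint : Integrable (fun u : ℝ => Real.exp (-u) * u ^ m / (Nat.factorial m : ℝ) * M)
        (volume.restrict (Set.Ioi (0 : ℝ))) := ((hc_int m).div_const _).mul_const M
    refine (norm_integral_le_of_norm_le hint ?_).trans ?_
    · filter_upwards [ae_restrict_mem measurableSet_Ioi] with u hu
      have hu0 : (0 : ℝ) ≤ u := (Set.mem_Ioi.mp hu).le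
      have hcn : (0 : ℝ) ≤ Real.exp (-u) * u ^ m / (Nat.factorial m : ℝ) :=
        div_nonneg (mul_nonneg (Real.exp_pos _).le (pow_nonneg hu0 m)) (Nat.cast_nonneg _)
      rw [norm_smul, Real.norm_eq_abs, abs_of_nonneg hcn]
      exact mul_le_mul_of_nonneg_left (hGb u hu) hcn
    · rw [integral_mul_const, integral_div, hc_val m,
        div_self (Nat.cast_ne_zero.mpr (Nat.factorial_ne_zero m)), one_mul]
  have hgeo : Summable fun m : ℕ => ‖z‖ ^ (m + 1) * M := by
    have : Summable fun m : ℕ => ‖z‖ ^ m * (‖z‖ * M) :=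
      (summable_geometric_of_lt_one (norm_nonneg z) hz).mul_right _
    refine this.congr fun m => by ring
  have hsum1 : Summable fun m : ℕ =>
      ‖z ^ (m + 1) • ∫ u in Set.Ioi (0 : ℝ),
        (Real.exp (-u) * u ^ m / (Nat.factorial m : ℝ)) • G u‖ := by
    refine Summable.of_nonneg_of_le (fun m => norm_nonneg _) (fun m => ?_) hgeo
    rw [norm_smul, norm_pow]
    exact mul_le_mul_of_nonneg_left (hJ_bound m) (by positivity)
  refine ⟨hsum1, ?_⟩
  -- scalar tower helper
  have hsc : ∀ (a : ℂ) (r : ℝ) (x : H), (a * (r : ℂ)) • x = a • (r • x) := by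
    intro a r x
    rw [mul_smul]
    congr 1
  -- the family of integrands
  set f : ℕ → ℝ → H := fun m u =>
    (z ^ m * Complex.ofReal (Real.exp (-u) * u ^ m / (Nat.factorial m : ℝ))) • G u with hfdef
  have hmeas : ∀ m : ℕ, AEStronglyMeasurable (f m) (volume.restrict (Set.Ioi (0 : ℝ))) := by
    intro m
    exact (Continuous.aestronglyMeasurable (by fun_prop)).smul hG
  have hint : ∀ m : ℕ, Integrable (f m) (volume.restrict (Set.Ioi (0 : ℝ))) := by
    intro m
    refine Integrable.mono'
      (g := fun u => ‖z‖ ^ m * (Real.exp (-u) * u ^ m / (Nat.factorial m : ℝ)) * M)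
      ?_ (hmeas m) ?_
    · exact ((((hc_int m).div_const _).const_mul _).mul_const M)
    · filter_upwards [ae_restrict_mem measurableSet_Ioi] with u hu
      have hu0 : (0 : ℝ) ≤ u := (Set.mem_Ioi.mp hu).le
      have hcn : (0 : ℝ) ≤ Real.exp (-u) * u ^ m / (Nat.factorial m : ℝ) :=
        div_nonneg (mul_nonneg (Real.exp_pos _).le (pow_nonneg hu0 m)) (Nat.cast_nonneg _)
      rw [hfdef]
      simp only
      rw [norm_smul, norm_mul, norm_pow, Complex.norm_real, Real.norm_eq_abs,
        abs_of_nonneg hcn]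
      exact mul_le_mul_of_nonneg_left (hGb u hu)
        (mul_nonneg (pow_nonneg (norm_nonneg z) m) hcn)
  have hnorm_int_le : ∀ m : ℕ,
      (∫ u in Set.Ioi (0 : ℝ), ‖f m u‖) ≤ ‖z‖ ^ m * M := by
    intro m
    have hb : Integrable
        (fun u : ℝ => ‖z‖ ^ m * (Real.exp (-u) * u ^ m / (Nat.factorial m : ℝ)) * M)
        (volume.restrict (Set.Ioi (0 : ℝ))) :=
      ((((hc_int m).div_const _).const_mul _).mul_const M)
    have h1 : (∫ u in Set.Ioi (0 : ℝ), ‖f m u‖)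
        ≤ ∫ u in Set.Ioi (0 : ℝ),
            ‖z‖ ^ m * (Real.exp (-u) * u ^ m / (Nat.factorial m : ℝ)) * M := by
      refine integral_mono_ae (hint m).norm hb ?_
      filter_upwards [ae_restrict_mem measurableSet_Ioi] with u hu
      have hu0 : (0 : ℝ) ≤ u := (Set.mem_Ioi.mp hu).le
      have hcn : (0 : ℝ) ≤ Real.exp (-u) * u ^ m / (Nat.factorial m : ℝ) :=
        div_nonneg (mul_nonneg (Real.exp_pos _).le (pow_nonneg hu0 m)) (Nat.cast_nonneg _)
      rw [hfdef]
      simp only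
      rw [norm_smul, norm_mul, norm_pow, Complex.norm_real, Real.norm_eq_abs,
        abs_of_nonneg hcn]
      exact mul_le_mul_of_nonneg_left (hGb u hu)
        (mul_nonneg (pow_nonneg (norm_nonneg z) m) hcn)
    refine h1.trans ?_
    rw [integral_mul_const, integral_const_mul, integral_div, hc_val m,
      div_self (Nat.cast_ne_zero.mpr (Nat.factorial_ne_zero m))]
    ring_nf
    exact le_rfl
  have hsum_norm : Summable fun m : ℕ => ∫ u in Set.Ioi (0 : ℝ), ‖f m u‖ := by
    have : Summable fun m : ℕ => ‖z‖ ^ m * M :=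
      (summable_geometric_of_lt_one (norm_nonneg z) hz).mul_right M
    exact this.of_nonneg_of_le
      (fun m => integral_nonneg fun u => norm_nonneg _) hnorm_int_le
  -- pointwise expansion of the exponential
  have hpt : ∀ u : ℝ, Complex.exp (-(1 - z) * (u : ℂ)) • G u = ∑' m : ℕ, f m u := by
    intro u
    have hcoef : ∀ m : ℕ, z ^ m * Complex.ofReal (Real.exp (-u) * u ^ m / (Nat.factorial m : ℝ))
        = (z * u) ^ m / ((Nat.factorial m : ℝ) : ℂ) * Complex.exp (-(u : ℂ)) := by
      intro m
      push_cast [Complex.ofReal_exp]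
      ring
    rw [hfdef]
    simp only
    simp_rw [hcoef]
    have hsumc : Summable fun m : ℕ =>
        (z * u) ^ m / ((Nat.factorial m : ℝ) : ℂ) * Complex.exp (-(u : ℂ)) := by
      have := NormedSpace.expSeries_div_summable (z * (u : ℂ))
      exact this.mul_right _
    rw [hsumc.tsum_smul_const, tsum_mul_right]
    have hexp : (∑' m : ℕ, (z * (u : ℂ)) ^ m / ((Nat.factorial m : ℝ) : ℂ))
        = Complex.exp (z * u) := by
      rw [Complex.exp_eq_exp_ℂ, NormedSpace.exp_eq_tsum_div]
      norm_num
    rw [hexp, ← Complex.exp_add]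
    congr 2
    ring
  -- change of variables t = Δt * u
  have hexpo : ∀ u : ℝ,
      Complex.exp (-((1 - z) / (Δt : ℂ)) * ((Δt * u : ℝ) : ℂ)) • F (Δt * u)
      = Complex.exp (-(1 - z) * (u : ℂ)) • G u := by
    intro u
    have h3 : -((1 - z) / (Δt : ℂ)) * ((Δt * u : ℝ) : ℂ) = -(1 - z) * (u : ℂ) := by
      push_cast
      field_simp
    rw [h3]
  have hcv : (∫ t in Set.Ioi (0 : ℝ), Complex.exp (-((1 - z) / (Δt : ℂ)) * (t : ℂ)) • F t)
      = Δt • ∫ u in Set.Ioi (0 : ℝ), Complex.exp (-(1 - z) * (u : ℂ)) • G u := by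
    have h := integral_comp_mul_left_Ioi
      (fun t : ℝ => Complex.exp (-((1 - z) / (Δt : ℂ)) * (t : ℂ)) • F t) 0 hΔt
    rw [mul_zero] at h
    calc (∫ t in Set.Ioi (0 : ℝ), Complex.exp (-((1 - z) / (Δt : ℂ)) * (t : ℂ)) • F t)
        = Δt • ∫ u in Set.Ioi (0 : ℝ),
            (fun t : ℝ => Complex.exp (-((1 - z) / (Δt : ℂ)) * (t : ℂ)) • F t) (Δt * u) := by
          rw [h, smul_smul, mul_inv_cancel₀ hΔt.ne', one_smul]
      _ = Δt • ∫ u in Set.Ioi (0 : ℝ), Complex.exp (-(1 - z) * (u : ℂ)) • G u := by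
          refine congrArg (Δt • ·) (integral_congr_ae (Filter.Eventually.of_forall fun u => ?_))
          exact hexpo u
  -- put everything together
  have hI : (∫ u in Set.Ioi (0 : ℝ), Complex.exp (-(1 - z) * (u : ℂ)) • G u)
      = ∑' m : ℕ, ∫ u in Set.Ioi (0 : ℝ), f m u := by
    rw [MeasureTheory.integral_tsum_of_summable_integral_norm hint hsum_norm]
    exact integral_congr_ae (Filter.Eventually.of_forall hpt)
  have hsumI : Summable fun m : ℕ => ∫ u in Set.Ioi (0 : ℝ), f m u :=
    Summable.of_norm_bounded hsum_norm fun m => norm_integral_le_integral_norm _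
  calc (z / (Δt : ℂ)) •
      (∫ t in Set.Ioi (0 : ℝ), Complex.exp (-((1 - z) / (Δt : ℂ)) * (t : ℂ)) • F t)
      = (z / (Δt : ℂ)) • ((Δt : ℂ) •
          ∫ u in Set.Ioi (0 : ℝ), Complex.exp (-(1 - z) * (u : ℂ)) • G u) := by
        rw [hcv]
        congr 1
    _ = z • ∫ u in Set.Ioi (0 : ℝ), Complex.exp (-(1 - z) * (u : ℂ)) • G u := by
        rw [smul_smul, div_mul_cancel₀ z hΔtC]
    _ = z • ∑' m : ℕ, ∫ u in Set.Ioi (0 : ℝ), f m u := by rw [hI]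
    _ = ∑' m : ℕ, z • ∫ u in Set.Ioi (0 : ℝ), f m u := (hsumI.tsum_const_smul z).symm
    _ = ∑' m : ℕ, z ^ (m + 1) • ∫ u in Set.Ioi (0 : ℝ),
          (Real.exp (-u) * u ^ m / (Nat.factorial m : ℝ)) • F (Δt * u) := by
        refine tsum_congr fun m => ?_
        rw [← integral_smul, ← integral_smul]
        refine integral_congr_ae (Filter.Eventually.of_forall fun u => ?_)
        rw [hfdef]
        simp only
        rw [smul_smul, ← hsc]
        congr 1
        ring
end
end

section
/- Let H be a real separable Hilbert space, Δt > 0, and let F : (0,∞) → H be strongly measurable. For k ≥ 1 define B_k := ∫₀^∞ F(Δt s) · e^{−s} s^{k−1}/(k−1)! ds. (i) If 1 ≤ p < ∞ and ∫₀^∞ ‖F(t)‖^p dt < ∞, then for every n ≥ 1: Δt Σ_{k=1}^n ‖B_k‖^p ≤ ∫₀^∞ ‖F(t)‖^p dt. (ii) If F is essentially bounded, then sup_{k≥1} ‖B_k‖ ≤ ess sup_{t>0} ‖F(t)‖. -/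
open MeasureTheory Filter Set
open scoped ENNReal NNReal RealInnerProductSpace

noncomputable section

namespace S14

def fk (k : ℕ) (u : ℝ) : ℝ := Real.exp (-u) * u ^ (k - 1) / (Nat.factorial (k - 1) : ℝ)

lemma fk_cont (k : ℕ) : Continuous (fk k) := by
  unfold fk; fun_prop

lemma fk_meas (k : ℕ) : Measurable fun u => ENNReal.ofReal (fk k u) :=
  ENNReal.measurable_ofReal.comp (fk_cont k).measurable

lemma fk_nonneg (k : ℕ) {u : ℝ} (hu : 0 ≤ u) : 0 ≤ fk k u := by
  unfold fk; positivity

lemma fk_eq_rpow {k : ℕ} (hk : 1 ≤ k) {u : ℝ} (hu : 0 < u) :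
    Real.exp (-u) * u ^ ((k : ℝ) - 1) = fk k u * (Nat.factorial (k - 1) : ℝ) := by
  have h : ((k : ℝ) - 1) = ((k - 1 : ℕ) : ℝ) := by
    have : (1 : ℕ) ≤ k := hk
    push_cast [Nat.cast_sub this]
    ring
  rw [fk, div_mul_cancel₀ _ (by positivity), h, Real.rpow_natCast]

lemma fk_integrableOn (k : ℕ) (hk : 1 ≤ k) : IntegrableOn (fk k) (Set.Ioi 0) := by
  have h0 : (0 : ℝ) < k := by exact_mod_cast hk
  have h := (Real.GammaIntegral_convergent h0).div_const (Nat.factorial (k - 1) : ℝ)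
  refine IntegrableOn.congr_fun h (fun u hu => ?_) measurableSet_Ioi
  rw [fk_eq_rpow hk hu, mul_div_cancel_right₀ _ (by positivity)]

lemma fk_integral (k : ℕ) (hk : 1 ≤ k) : ∫ u in Set.Ioi (0:ℝ), fk k u = 1 := by
  have h0 : (0 : ℝ) < k := by exact_mod_cast hk
  have hG : Real.Gamma (k : ℝ) = ∫ x in Set.Ioi (0:ℝ), Real.exp (-x) * x ^ ((k:ℝ) - 1) :=
    Real.Gamma_eq_integral h0
  have hfac : Real.Gamma (k : ℝ) = (Nat.factorial (k - 1) : ℝ) := by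
    have : ((k : ℝ)) = ((k - 1 : ℕ) : ℝ) + 1 := by
      have : (1 : ℕ) ≤ k := hk
      push_cast [Nat.cast_sub this]; ring
    rw [this, Real.Gamma_nat_eq_factorial]
  have hcongr : ∫ x in Set.Ioi (0:ℝ), Real.exp (-x) * x ^ ((k:ℝ) - 1)
      = ∫ x in Set.Ioi (0:ℝ), fk k x * (Nat.factorial (k - 1) : ℝ) := by
    refine setIntegral_congr_fun measurableSet_Ioi (fun u hu => ?_)
    exact fk_eq_rpow hk hu
  rw [hcongr, integral_mul_const] at hG
  have hfacpos : (0:ℝ) < (Nat.factorial (k - 1) : ℝ) := by positivity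
  rw [hfac] at hG
  exact mul_right_cancel₀ hfacpos.ne' (hG.symm.trans (one_mul _).symm)

lemma fk_lintegral (k : ℕ) (hk : 1 ≤ k) :
    ∫⁻ u in Set.Ioi (0:ℝ), ENNReal.ofReal (fk k u) = 1 := by
  rw [← ofReal_integral_eq_lintegral_ofReal (fk_integrableOn k hk)
    ((ae_restrict_iff' measurableSet_Ioi).2 (Filter.Eventually.of_forall
      fun u hu => fk_nonneg k hu.le)), fk_integral k hk, ENNReal.ofReal_one]

lemma fk_sum_le (n : ℕ) {u : ℝ} (hu : 0 ≤ u) :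
    ∑ k ∈ Finset.Icc 1 n, fk k u ≤ 1 := by
  have h1 : ∑ k ∈ Finset.Icc 1 n, fk k u
      = Real.exp (-u) * ∑ i ∈ Finset.range n, u ^ i / (Nat.factorial i : ℝ) := by
    rw [Finset.mul_sum, ← Finset.Ico_add_one_right_eq_Icc, Finset.sum_Ico_eq_sum_range]
    refine Finset.sum_congr (by norm_num) fun i _ => ?_
    simp [fk, Nat.add_sub_cancel, mul_div_assoc]
  rw [h1]
  calc Real.exp (-u) * ∑ i ∈ Finset.range n, u ^ i / (Nat.factorial i : ℝ)
      ≤ Real.exp (-u) * Real.exp u :=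
        mul_le_mul_of_nonneg_left (Real.sum_le_exp_of_nonneg hu n) (Real.exp_nonneg _)
    _ = 1 := by rw [← Real.exp_add]; simp

/-- Jensen via Hölder for probability densities. -/
lemma jensen {α : Type*} [MeasurableSpace α] {μ : Measure α} {w g : α → ℝ≥0∞}
    (hw : AEMeasurable w μ) (hg : AEMeasurable g μ) (hw1 : ∫⁻ a, w a ∂μ = 1)
    {p : ℝ} (hp : 1 ≤ p) :
    (∫⁻ a, w a * g a ∂μ) ^ p ≤ ∫⁻ a, w a * g a ^ p ∂μ := by
  rcases eq_or_lt_of_le hp with h1 | h1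
  · simp [← h1]
  have hp0 : 0 < p := lt_trans zero_lt_one h1
  have hpq : p.HolderConjugate (p / (p - 1)) := Real.HolderConjugate.conjExponent h1
  set q := p / (p - 1) with hq
  have hq0 : 0 < q := hpq.symm.pos
  have key := ENNReal.lintegral_mul_le_Lp_mul_Lq μ hpq
    (f := fun a => w a ^ (1/p) * g a) (g := fun a => w a ^ (1/q))
    ((hw.pow_const _).mul hg) (hw.pow_const _)
  have e1 : ∀ a, (fun a => w a ^ (1/p) * g a) a * (fun a => w a ^ (1/q)) a = w a * g a := by
    intro a
    have : w a ^ (1/p) * w a ^ (1/q) = w a := by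
      rw [← ENNReal.rpow_add_of_nonneg _ _ (by positivity) (by positivity),
        one_div, one_div, hpq.inv_add_inv_eq_one, ENNReal.rpow_one]
    calc w a ^ (1/p) * g a * w a ^ (1/q) = (w a ^ (1/p) * w a ^ (1/q)) * g a := by ring
      _ = w a * g a := by rw [this]
  have e2 : ∀ a, (w a ^ (1/p) * g a) ^ p = w a * g a ^ p := by
    intro a
    rw [ENNReal.mul_rpow_of_nonneg _ _ hp0.le, ← ENNReal.rpow_mul,
      one_div_mul_cancel hp0.ne', ENNReal.rpow_one]
  have e3 : ∀ a, (w a ^ (1/q)) ^ q = w a := by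
    intro a
    rw [← ENNReal.rpow_mul, one_div_mul_cancel hq0.ne', ENNReal.rpow_one]
  simp only [Pi.mul_apply] at key
  rw [show (∫⁻ a, w a ^ (1/p) * g a * w a ^ (1/q) ∂μ) = ∫⁻ a, w a * g a ∂μ from
    lintegral_congr fun a => e1 a] at key
  rw [show (∫⁻ a, (w a ^ (1/p) * g a) ^ p ∂μ) = ∫⁻ a, w a * g a ^ p ∂μ from
    lintegral_congr fun a => e2 a] at key
  rw [show (∫⁻ a, (w a ^ (1/q)) ^ q ∂μ) = ∫⁻ a, w a ∂μ from
    lintegral_congr fun a => e3 a, hw1, ENNReal.one_rpow, mul_one] at key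
  calc (∫⁻ a, w a * g a ∂μ) ^ p ≤ ((∫⁻ a, w a * g a ^ p ∂μ) ^ (1/p)) ^ p :=
        ENNReal.rpow_le_rpow key hp0.le
    _ = ∫⁻ a, w a * g a ^ p ∂μ := by
        rw [← ENNReal.rpow_mul, one_div_mul_cancel hp0.ne', ENNReal.rpow_one]

end S14

namespace S14

lemma quadB_enorm_le {H : Type*} [NormedAddCommGroup H] [NormedSpace ℝ H]
    (Δt : ℝ) (F : ℝ → H) (k : ℕ) :
    (‖quadB Δt F k‖₊ : ℝ≥0∞) ≤
      ∫⁻ u in Set.Ioi (0:ℝ), ENNReal.ofReal (fk k u) * (‖F (Δt * u)‖₊ : ℝ≥0∞) := by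
  refine le_trans (enorm_integral_le_lintegral_enorm _) (le_of_eq ?_)
  refine lintegral_congr_ae ?_
  filter_upwards [ae_restrict_mem measurableSet_Ioi] with u hu
  rw [enorm_smul, Real.enorm_eq_ofReal]
  · rfl
  · exact fk_nonneg k hu.le

end S14

/-- `ℓ^p`-stability of the Backward Euler convolution quadrature:
(i) `Δt Σ_{k=1}^n ‖B_k‖^p ≤ ∫₀^∞ ‖F(t)‖^p dt` and (ii) `sup_{k≥1} ‖B_k‖` is bounded
by any essential bound of `‖F‖`. -/
theorem statement14 {H : Type*} [NormedAddCommGroup H] [InnerProductSpace ℝ H]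
    [CompleteSpace H]
    (Δt : ℝ) (hΔt : 0 < Δt) (F : ℝ → H)
    (hF : AEStronglyMeasurable F (volume.restrict (Set.Ioi (0 : ℝ)))) :
    (∀ p : ℝ, 1 ≤ p →
      (∫⁻ t in Set.Ioi (0 : ℝ), ENNReal.ofReal (‖F t‖ ^ p)) < ⊤ →
      ∀ n : ℕ, 1 ≤ n →
        ENNReal.ofReal (Δt * ∑ k ∈ Finset.Icc 1 n, ‖quadB Δt F k‖ ^ p) ≤
          ∫⁻ t in Set.Ioi (0 : ℝ), ENNReal.ofReal (‖F t‖ ^ p)) ∧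
    (∀ M : ℝ, (∀ᵐ t ∂(volume.restrict (Set.Ioi (0 : ℝ))), ‖F t‖ ≤ M) →
      ∀ k : ℕ, 1 ≤ k → ‖quadB Δt F k‖ ≤ M) := by
  classical
  -- preliminary: scaling map facts
  have hpre : (fun u : ℝ => Δt * u) ⁻¹' (Set.Ioi 0) = Set.Ioi 0 := by
    ext u
    simp only [Set.mem_preimage, Set.mem_Ioi]
    exact ⟨fun h => by nlinarith, fun h => mul_pos hΔt h⟩
  have hmap : Measure.map (fun u : ℝ => Δt * u) (volume.restrict (Set.Ioi 0))
      = (ENNReal.ofReal |Δt⁻¹|) • volume.restrict (Set.Ioi 0) := by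
    conv_lhs => rw [← hpre]
    rw [← Measure.restrict_map (measurable_const_mul Δt) measurableSet_Ioi,
      Real.map_volume_mul_left hΔt.ne', Measure.restrict_smul]
  have hsmul_ac : (ENNReal.ofReal |Δt⁻¹|) • volume.restrict (Set.Ioi (0:ℝ))
      ≪ volume.restrict (Set.Ioi (0:ℝ)) := by
    intro s hs
    simp [hs]
  have hF' : AEStronglyMeasurable (fun u : ℝ => F (Δt * u))
      (volume.restrict (Set.Ioi 0)) := by
    have h1 : AEStronglyMeasurable F
        (Measure.map (fun u : ℝ => Δt * u) (volume.restrict (Set.Ioi 0))) := by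
      rw [hmap]; exact hF.mono_ac hsmul_ac
    exact h1.comp_aemeasurable (measurable_const_mul Δt).aemeasurable
  set g : ℝ → ℝ≥0∞ := fun u => (‖F (Δt * u)‖₊ : ℝ≥0∞) with hgdef
  have hg : AEMeasurable g (volume.restrict (Set.Ioi 0)) := hF'.enorm
  constructor
  · -- part (i)
    intro p hp _hFp n _hn
    have hp0 : (0:ℝ) ≤ p := le_trans zero_le_one hp
    -- per-k bound
    have hk_bound : ∀ k ∈ Finset.Icc 1 n,
        ENNReal.ofReal (‖quadB Δt F k‖ ^ p) ≤
          ∫⁻ u in Set.Ioi (0:ℝ), ENNReal.ofReal (S14.fk k u) * g u ^ p := by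
      intro k hk
      have hk1 : 1 ≤ k := (Finset.mem_Icc.mp hk).1
      have h1 : ENNReal.ofReal (‖quadB Δt F k‖ ^ p)
          = ((‖quadB Δt F k‖₊ : ℝ≥0∞)) ^ p := by
        rw [← ENNReal.ofReal_rpow_of_nonneg (norm_nonneg _) hp0, ofReal_norm, enorm_eq_nnnorm]
      rw [h1]
      calc ((‖quadB Δt F k‖₊ : ℝ≥0∞)) ^ p
          ≤ (∫⁻ u in Set.Ioi (0:ℝ), ENNReal.ofReal (S14.fk k u) * g u) ^ p :=
            ENNReal.rpow_le_rpow (S14.quadB_enorm_le Δt F k) hp0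
        _ ≤ ∫⁻ u in Set.Ioi (0:ℝ), ENNReal.ofReal (S14.fk k u) * g u ^ p :=
            S14.jensen ((S14.fk_meas k).aemeasurable) hg (S14.fk_lintegral k hk1) hp
    -- change of variables
    have hmeas_pow : AEMeasurable (fun t : ℝ => ((‖F t‖₊ : ℝ≥0∞)) ^ p)
        (Measure.map (fun u : ℝ => Δt * u) (volume.restrict (Set.Ioi 0))) := by
      rw [hmap]
      exact (hF.enorm.mono_ac hsmul_ac).pow_const p
    have hchange : ∫⁻ u in Set.Ioi (0:ℝ), g u ^ p
        = ENNReal.ofReal |Δt⁻¹| * ∫⁻ t in Set.Ioi (0:ℝ), ((‖F t‖₊ : ℝ≥0∞)) ^ p := by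
      rw [← smul_eq_mul, ← lintegral_smul_measure, ← hmap,
        lintegral_map' hmeas_pow (measurable_const_mul Δt).aemeasurable]
    calc ENNReal.ofReal (Δt * ∑ k ∈ Finset.Icc 1 n, ‖quadB Δt F k‖ ^ p)
        = ENNReal.ofReal Δt * ∑ k ∈ Finset.Icc 1 n, ENNReal.ofReal (‖quadB Δt F k‖ ^ p) := by
          rw [ENNReal.ofReal_mul hΔt.le, ENNReal.ofReal_sum_of_nonneg]
          intro k _
          exact Real.rpow_nonneg (norm_nonneg _) p
      _ ≤ ENNReal.ofReal Δt * ∑ k ∈ Finset.Icc 1 n,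
            ∫⁻ u in Set.Ioi (0:ℝ), ENNReal.ofReal (S14.fk k u) * g u ^ p := by
          exact mul_le_mul_right (Finset.sum_le_sum hk_bound) _
      _ = ENNReal.ofReal Δt * ∫⁻ u in Set.Ioi (0:ℝ),
            (∑ k ∈ Finset.Icc 1 n, ENNReal.ofReal (S14.fk k u)) * g u ^ p := by
          rw [← lintegral_finsetSum' (f := fun k u => ENNReal.ofReal (S14.fk k u) * g u ^ p) _ (fun k _ =>
            ((S14.fk_meas k).aemeasurable.restrict).mul (hg.pow_const p))]
          congr 1
          exact lintegral_congr fun u => (Finset.sum_mul _ _ _).symm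
      _ ≤ ENNReal.ofReal Δt * ∫⁻ u in Set.Ioi (0:ℝ), g u ^ p := by
          refine mul_le_mul_right (lintegral_mono_ae ?_) _
          filter_upwards [ae_restrict_mem measurableSet_Ioi] with u hu
          calc (∑ k ∈ Finset.Icc 1 n, ENNReal.ofReal (S14.fk k u)) * g u ^ p
              ≤ 1 * g u ^ p := by
                refine mul_le_mul_left ?_ _
                rw [← ENNReal.ofReal_sum_of_nonneg (fun k _ => S14.fk_nonneg k hu.le)]
                exact le_trans (ENNReal.ofReal_le_ofReal (S14.fk_sum_le n hu.le))
                  (le_of_eq ENNReal.ofReal_one)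
            _ = g u ^ p := one_mul _
      _ = ENNReal.ofReal Δt * (ENNReal.ofReal |Δt⁻¹|
            * ∫⁻ t in Set.Ioi (0:ℝ), ((‖F t‖₊ : ℝ≥0∞)) ^ p) := by rw [hchange]
      _ = ∫⁻ t in Set.Ioi (0:ℝ), ENNReal.ofReal (‖F t‖ ^ p) := by
          rw [← mul_assoc, ← ENNReal.ofReal_mul hΔt.le,
            abs_of_pos (inv_pos.mpr hΔt), mul_inv_cancel₀ hΔt.ne', ENNReal.ofReal_one,
            one_mul]
          exact lintegral_congr fun t => by
            rw [← ENNReal.ofReal_rpow_of_nonneg (norm_nonneg _) hp0,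
              ofReal_norm, enorm_eq_nnnorm]
  · -- part (ii)
    intro M hM k hk1
    have hM0 : (0:ℝ) ≤ M := by
      have hne : volume.restrict (Set.Ioi (0:ℝ)) ≠ 0 := by
        rw [Ne, Measure.restrict_eq_zero, Real.volume_Ioi]
        exact ENNReal.top_ne_zero
      have : (ae (volume.restrict (Set.Ioi (0:ℝ)))).NeBot := ae_neBot.mpr hne
      obtain ⟨t, ht⟩ := hM.exists
      exact le_trans (norm_nonneg _) ht
    have hbound : ∀ᵐ u ∂(volume.restrict (Set.Ioi (0:ℝ))), ‖F (Δt * u)‖ ≤ M := by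
      refine ae_of_ae_map (p := fun t => ‖F t‖ ≤ M) (measurable_const_mul Δt).aemeasurable ?_
      rw [hmap]
      exact Measure.ae_smul_measure hM _
    rw [← ENNReal.ofReal_le_ofReal_iff hM0, ofReal_norm, enorm_eq_nnnorm]
    calc ((‖quadB Δt F k‖₊ : ℝ≥0∞))
        ≤ ∫⁻ u in Set.Ioi (0:ℝ), ENNReal.ofReal (S14.fk k u) * g u :=
          S14.quadB_enorm_le Δt F k
      _ ≤ ∫⁻ u in Set.Ioi (0:ℝ), ENNReal.ofReal (S14.fk k u) * ENNReal.ofReal M := by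
          refine lintegral_mono_ae ?_
          filter_upwards [hbound] with u hu
          refine mul_le_mul_right ?_ _
          show (‖F (Δt * u)‖₊ : ℝ≥0∞) ≤ ENNReal.ofReal M
          rw [← enorm_eq_nnnorm, ← ofReal_norm]
          exact ENNReal.ofReal_le_ofReal hu
      _ = (∫⁻ u in Set.Ioi (0:ℝ), ENNReal.ofReal (S14.fk k u)) * ENNReal.ofReal M :=
          lintegral_mul_const _ (S14.fk_meas k)
      _ = ENNReal.ofReal M := by rw [S14.fk_lintegral k hk1, one_mul]
end
end
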